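/- arXiv:1211.2251 — 2 statements merged into one kernel-verified Lean document; each statement's English description precedes it below -/
import Mathlib

section
/- For all natural numbers n, h, k, the number of independent k-subsets of the h-th power of a path on n vertices equals the binomial coefficient C(n - h*k + h, k). -/
open Finset

/-- The independent subsets of the h-th power of the path on vertices {1,...,n}:
subsets of {1,...,n} in which any two distinct elements differ by more than h. -/
def Indep (n h : ℕ) : Finset (Finset ℕ) :=
  (Finset.Icc 1 n).powerset.filter (fun S => ∀ a ∈ S, ∀ b ∈ S, a < b → h < b - a)

/-- The independent k-subsets. -/
def IndepK (n h k : ℕ) : Finset (Finset ℕ) :=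
  (Indep n h).filter (fun S => S.card = k)

lemma mem_IndepK {n h k : ℕ} {S : Finset ℕ} :
    S ∈ IndepK n h k ↔
      (∀ x ∈ S, 1 ≤ x ∧ x ≤ n) ∧ (∀ a ∈ S, ∀ b ∈ S, a < b → h < b - a) ∧ S.card = k := by
  simp only [IndepK, Indep, Finset.mem_filter, Finset.mem_powerset, Finset.subset_iff,
    Finset.mem_Icc, and_assoc]

lemma indep_rec (n h k : ℕ) (hn : 1 ≤ n) (hk : 1 ≤ k) :
    (IndepK n h k).card = (IndepK (n - 1) h k).card + (IndepK (n - h - 1) h (k - 1)).card := by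
  classical
  rw [← Finset.card_filter_add_card_filter_not (s := IndepK n h k)
    (p := fun S => n ∈ S)]
  have h1 : (IndepK n h k).filter (fun S => ¬ n ∈ S) = IndepK (n - 1) h k := by
    ext S
    simp only [Finset.mem_filter, mem_IndepK]
    constructor
    · rintro ⟨⟨hmem, hgap, hcard⟩, hnS⟩
      refine ⟨fun x hx => ?_, hgap, hcard⟩
      have := hmem x hx
      have hxn : x ≠ n := fun e => hnS (e ▸ hx)
      omega
    · rintro ⟨hmem, hgap, hcard⟩
      refine ⟨⟨fun x hx => ?_, hgap, hcard⟩, fun hnS => ?_⟩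
      · have := hmem x hx; omega
      · have := hmem n hnS; omega
  have h2 : ((IndepK n h k).filter (fun S => n ∈ S)).card = (IndepK (n - h - 1) h (k - 1)).card := by
    refine Finset.card_bij' (fun S _ => S.erase n) (fun T _ => insert n T) ?_ ?_ ?_ ?_
    · intro S hS
      simp only [Finset.mem_filter, mem_IndepK] at hS
      obtain ⟨⟨hmem, hgap, hcard⟩, hnS⟩ := hS
      rw [mem_IndepK]
      refine ⟨fun x hx => ?_, fun a ha b hb hab => ?_, ?_⟩
      · rw [Finset.mem_erase] at hx
        obtain ⟨hxn, hxS⟩ := hx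
        have h1x := hmem x hxS
        have hgx := hgap x hxS n hnS (by omega)
        omega
      · exact hgap a (Finset.mem_of_mem_erase ha) b (Finset.mem_of_mem_erase hb) hab
      · rw [Finset.card_erase_of_mem hnS, hcard]
    · intro T hT
      rw [mem_IndepK] at hT
      obtain ⟨hmem, hgap, hcard⟩ := hT
      have hnT : n ∉ T := by
        intro hn'
        have := hmem n hn'
        omega
      simp only [Finset.mem_filter, mem_IndepK]
      refine ⟨⟨fun x hx => ?_, fun a ha b hb hab => ?_, ?_⟩, Finset.mem_insert_self n T⟩
      · rw [Finset.mem_insert] at hx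
        rcases hx with rfl | hx
        · omega
        · have := hmem x hx; omega
      · rw [Finset.mem_insert] at ha hb
        rcases ha with rfl | ha
        · rcases hb with rfl | hb
          · omega
          · have := hmem b hb; omega
        · rcases hb with rfl | hb
          · have := hmem a ha; omega
          · exact hgap a ha b hb hab
      · rw [Finset.card_insert_of_notMem hnT, hcard]; omega
    · intro S hS
      simp only [Finset.mem_filter] at hS
      exact Finset.insert_erase hS.2
    · intro T hT
      rw [mem_IndepK] at hT
      have hnT : n ∉ T := by
        intro hn'
        have := hT.1 n hn'
        omega
      exact Finset.erase_insert hnT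
  rw [h1, h2]
  ring

lemma choose_rec (n h k : ℕ) (hn : 1 ≤ n) (hk : 1 ≤ k) :
    Nat.choose (n + h - h * k) k =
      Nat.choose (n - 1 + h - h * k) k + Nat.choose (n - h - 1 + h - h * (k - 1)) (k - 1) := by
  obtain ⟨j, rfl⟩ : ∃ j, k = j + 1 := ⟨k - 1, by omega⟩
  have hj1 : j + 1 - 1 = j := rfl
  rw [hj1]
  have hmul : h * (j + 1) = h * j + h := by ring
  rcases Nat.eq_zero_or_pos j with rfl | hj
  · simp only [Nat.zero_add, Nat.mul_one, Nat.mul_zero, Nat.sub_zero, zero_add, mul_one, mul_zero,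
      Nat.choose_one_right, Nat.choose_zero_right]
    omega
  · have hle : h ≤ h * j := Nat.le_mul_of_pos_right h hj
    rcases Nat.lt_or_ge (h * j) n with hlt | hge
    · have e1 : n + h - h * (j + 1) = (n - 1 - h * j) + 1 := by omega
      have e2 : n - 1 + h - h * (j + 1) = n - 1 - h * j := by omega
      have e3 : n - h - 1 + h - h * j = n - 1 - h * j := by omega
      rw [e1, e2, e3, Nat.choose_succ_succ]
      ring
    · have e1 : n + h - h * (j + 1) = 0 := by omega
      have e2 : n - 1 + h - h * (j + 1) = 0 := by omega
      have e3 : n - h - 1 + h - h * j = 0 := by omega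
      rw [e1, e2, e3]
      obtain ⟨j', rfl⟩ : ∃ j', j = j' + 1 := ⟨j - 1, by omega⟩
      simp

lemma indep_count (h : ℕ) : ∀ n k : ℕ, (IndepK n h k).card = Nat.choose (n + h - h * k) k := by
  intro n
  induction n using Nat.strong_induction_on with
  | _ n ih =>
    intro k
    match n, k with
    | 0, k =>
      have h0 : Indep 0 h = {∅} := by
        ext S
        simp [Indep, Finset.Icc_eq_empty (by omega : ¬ (1:ℕ) ≤ 0), Finset.subset_empty]
        rintro rfl
        simp
      match k with
      | 0 => simp [IndepK, h0, Finset.filter_singleton]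
      | k + 1 =>
        have e : 0 + h - h * (k + 1) = 0 := by
          have : h ≤ h * (k + 1) := Nat.le_mul_of_pos_right h k.succ_pos
          omega
        rw [e, Nat.choose_zero_succ]
        simp [IndepK, h0, Finset.filter_singleton]
    | n + 1, 0 =>
      have h0 : IndepK (n + 1) h 0 = {∅} := by
        ext S
        simp only [mem_IndepK, Finset.card_eq_zero, Finset.mem_singleton]
        constructor
        · rintro ⟨_, _, rfl⟩; rfl
        · rintro rfl; simp
      rw [h0]
      simp
    | n + 1, k + 1 =>
      rw [indep_rec (n + 1) h (k + 1) (by omega) (by omega)]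
      have e1 : n + 1 - 1 = n := by omega
      have e2 : n + 1 - h - 1 = n - h := by omega
      have e0 : k + 1 - 1 = k := rfl
      rw [e0, e1, e2, ih n (by omega) (k + 1), ih (n - h) (by omega) k]
      rw [choose_rec (n + 1) h (k + 1) (by omega) (by omega), e0]
      have a1 : n + 1 - 1 + h - h * (k + 1) = n + h - h * (k + 1) := by omega
      have a2 : n + 1 - h - 1 + h - h * k = n - h + h - h * k := by omega
      rw [a1, a2]

theorem stmt0 (n h k : ℕ) :
    (IndepK n h k).card = Nat.choose (n + h - h * k) k := by
  exact indep_count h n k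
end

section
/- Let H(n,h) be the number of covering pairs in the poset of independent subsets of P_n^(h) ordered by inclusion, and let F^(h) be the h-Fibonacci sequence defined by F^(h)_m = 1 for 1 ≤ m ≤ h+1 and F^(h)_m = F^(h)_{m-1} + F^(h)_{m-h-1} for m > h+1. Then for all n, h ≥ 0: H(n,h) = Σ_{i=1}^{n} F^(h)_i · F^(h)_{n-i+1}, i.e., H(n,h) is the n-th term of the convolution of F^(h) with itself. -/
open Finset

/-- The number of covering pairs (S,T): T ⊆ S, |S| = |T| + 1, both independent. -/
def coverCount (n h : ℕ) : ℕ :=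
  ((Indep n h ×ˢ Indep n h).filter
    (fun p => p.2 ⊆ p.1 ∧ p.1.card = p.2.card + 1)).card

/-- The h-Fibonacci sequence: 1 for n ≤ h+1, then F_n = F_{n-1} + F_{n-h-1}. -/
def hFib (h : ℕ) (n : ℕ) : ℕ :=
  if hn : n ≤ h + 1 then 1 else hFib h (n - 1) + hFib h (n - h - 1)
termination_by n
decreasing_by all_goals omega

lemma mem_Indep {n h : ℕ} {S : Finset ℕ} :
    S ∈ Indep n h ↔ S ⊆ Finset.Icc 1 n ∧ ∀ a ∈ S, ∀ b ∈ S, a < b → h < b - a := by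
  simp [Indep]

lemma indep_mono {n h : ℕ} {S T : Finset ℕ} (hS : S ∈ Indep n h) (hTS : T ⊆ S) :
    T ∈ Indep n h := by
  rw [mem_Indep] at hS ⊢
  exact ⟨hTS.trans hS.1, fun a ha b hb => hS.2 a (hTS ha) b (hTS hb)⟩

lemma hFib_eq_one {h n : ℕ} (hn : n ≤ h + 1) : hFib h n = 1 := by
  rw [hFib]; simp [hn]

lemma hFib_rec {h n : ℕ} (hn : h + 1 < n) :
    hFib h n = hFib h (n - 1) + hFib h (n - h - 1) := by
  rw [hFib, dif_neg (by omega)]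

lemma card_Indep (h : ℕ) : ∀ n : ℕ, (Indep n h).card = hFib h (n + h + 1) := by
  intro n
  induction n using Nat.strong_induction_on with
  | _ n ih =>
    match n with
    | 0 =>
      have h0 : Indep 0 h = {∅} := by
        ext S
        simp only [mem_Indep, mem_singleton]
        constructor
        · rintro ⟨hs, -⟩
          have : Finset.Icc 1 0 = (∅ : Finset ℕ) := by simp
          rw [this, subset_empty] at hs; exact hs
        · rintro rfl; simp
      rw [h0, hFib_eq_one (by omega)]; simp
    | Nat.succ m =>
      have hdecomp : Indep (m + 1) h
          = Indep m h ∪ (Indep (m - h) h).image (insert (m + 1)) := by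
        ext S
        simp only [mem_union, mem_image, mem_Indep]
        constructor
        · rintro ⟨hsub, hind⟩
          by_cases hm : m + 1 ∈ S
          · right
            refine ⟨S.erase (m + 1), ⟨⟨?_, ?_⟩, ?_⟩⟩
            · intro a ha
              have ha' := mem_of_mem_erase ha
              have h1 := hsub ha'
              simp only [mem_Icc] at h1 ⊢
              have hne : a ≠ m + 1 := ne_of_mem_erase ha
              have := hind a ha' (m + 1) hm (by omega)
              omega
            · intro a ha b hb hab
              exact hind a (mem_of_mem_erase ha) b (mem_of_mem_erase hb) hab
            · exact insert_erase hm
          · left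
            refine ⟨fun a ha => ?_, hind⟩
            have h1 := hsub ha
            simp only [mem_Icc] at h1 ⊢
            have : a ≠ m + 1 := fun he => hm (he ▸ ha)
            omega
        · rintro (⟨hsub, hind⟩ | ⟨T, ⟨hTsub, hTind⟩, rfl⟩)
          · exact ⟨hsub.trans (Icc_subset_Icc_right (by omega)), hind⟩
          · have hT : ∀ a ∈ T, 1 ≤ a ∧ a ≤ m - h := by
              intro a ha; have := hTsub ha; simpa [mem_Icc] using this
            constructor
            · intro a ha
              rcases mem_insert.mp ha with rfl | ha'
              · simp [mem_Icc]
              · have := hT a ha'; simp only [mem_Icc]; omega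
            · intro a ha b hb hab
              rcases mem_insert.mp ha with rfl | ha' <;>
                rcases mem_insert.mp hb with rfl | hb'
              · omega
              · have := hT b hb'; omega
              · have := hT a ha'; omega
              · exact hTind a ha' b hb' hab
      have hnotmem : ∀ T ∈ Indep (m - h) h, m + 1 ∉ T := by
        intro T hT hmem
        have := (mem_Indep.mp hT).1 hmem
        simp only [mem_Icc] at this; omega
      have hinj : Set.InjOn (insert (m + 1)) (Indep (m - h) h : Set (Finset ℕ)) := by
        intro T1 h1 T2 h2 he
        have n1 := hnotmem T1 h1
        have n2 := hnotmem T2 h2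
        have : (insert (m+1) T1).erase (m+1) = (insert (m+1) T2).erase (m+1) := by rw [he]
        rwa [erase_insert n1, erase_insert n2] at this
      have hdisj : Disjoint (Indep m h) ((Indep (m - h) h).image (insert (m + 1))) := by
        rw [disjoint_right]
        intro S hS hS'
        simp only [mem_image] at hS
        obtain ⟨T, hT, rfl⟩ := hS
        have := (mem_Indep.mp hS').1 (mem_insert_self (m+1) T)
        simp only [mem_Icc] at this; omega
      rw [hdecomp, card_union_of_disjoint hdisj, card_image_of_injOn hinj,
        ih m (by omega), ih (m - h) (by omega)]
      rw [hFib_rec (n := m + 1 + h + 1) (by omega)]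
      congr 1
      · congr 1; omega
      · rcases le_or_gt m h with hc | hc
        · rw [hFib_eq_one (by omega), hFib_eq_one (by omega)]
        · congr 1; omega

lemma card_contain (n h i : ℕ) (h1 : 1 ≤ i) (h2 : i ≤ n) :
    ((Indep n h).filter (fun S => i ∈ S)).card
      = (Indep (i - h - 1) h).card * (Indep (n - i - h) h).card := by
  rw [← card_product]
  apply card_nbij'
    (i := fun S => (S.filter (· < i), (S.filter (fun b => i < b)).image (fun b => b - (i + h))))
    (j := fun p => insert i (p.1 ∪ p.2.image (fun b => b + (i + h))))
  · intro S hS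
    simp only [mem_coe, mem_filter] at hS
    obtain ⟨hSI, hiS⟩ := hS
    rw [mem_Indep] at hSI
    obtain ⟨hsub, hind⟩ := hSI
    have bound : ∀ a ∈ S, 1 ≤ a ∧ a ≤ n := by
      intro a ha; have := hsub ha; simpa [mem_Icc] using this
    simp only [mem_coe, mem_product]
    constructor
    · rw [mem_Indep]
      constructor
      · intro a ha
        simp only [mem_filter] at ha
        have hb := bound a ha.1
        have := hind a ha.1 i hiS ha.2
        simp only [mem_Icc]; omega
      · intro a ha b hb hab
        simp only [mem_filter] at ha hb
        exact hind a ha.1 b hb.1 hab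
    · rw [mem_Indep]
      constructor
      · intro c hc
        simp only [mem_image, mem_filter] at hc
        obtain ⟨b, ⟨hbS, hib⟩, rfl⟩ := hc
        have hb := bound b hbS
        have := hind i hiS b hbS hib
        simp only [mem_Icc]; omega
      · intro c hc d hd hcd
        simp only [mem_image, mem_filter] at hc hd
        obtain ⟨b, ⟨hbS, hib⟩, rfl⟩ := hc
        obtain ⟨b', ⟨hbS', hib'⟩, rfl⟩ := hd
        have g1 := hind i hiS b hbS hib
        have g2 := hind i hiS b' hbS' hib'
        have hbb : b < b' := by omega
        have := hind b hbS b' hbS' hbb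
        omega
  · intro p hp
    simp only [mem_coe, mem_product] at hp
    obtain ⟨hA, hB⟩ := hp
    rw [mem_Indep] at hA hB
    obtain ⟨hAsub, hAind⟩ := hA
    obtain ⟨hBsub, hBind⟩ := hB
    have bA : ∀ a ∈ p.1, 1 ≤ a ∧ a ≤ i - h - 1 := by
      intro a ha; have := hAsub ha; simpa [mem_Icc] using this
    have bB : ∀ b ∈ p.2, 1 ≤ b ∧ b ≤ n - i - h := by
      intro b hb; have := hBsub hb; simpa [mem_Icc] using this
    simp only [mem_coe, mem_filter]
    refine ⟨?_, mem_insert_self _ _⟩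
    rw [mem_Indep]
    constructor
    · intro a ha
      simp only [mem_insert, mem_union, mem_image] at ha
      simp only [mem_Icc]
      rcases ha with rfl | haA | ⟨b, hb, rfl⟩
      · omega
      · have := bA a haA; omega
      · have := bB b hb; omega
    · intro a ha b hb hab
      simp only [mem_insert, mem_union, mem_image] at ha hb
      rcases ha with rfl | haA | ⟨c, hc, rfl⟩ <;>
        rcases hb with rfl | hbA | ⟨d, hd, rfl⟩
      · omega
      · have := bA b hbA; omega
      · have := bB d hd; omega
      · have := bA a haA; omega
      · exact hAind a haA b hbA hab
      · have := bA a haA; have := bB d hd; omega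
      · have := bB c hc; omega
      · have := bB c hc; have := bA b hbA; omega
      · have g1 := bB c hc; have g2 := bB d hd
        have hcd : c < d := by omega
        have := hBind c hc d hd hcd
        omega
  · intro S hS
    simp only [mem_coe, mem_filter] at hS
    obtain ⟨hSI, hiS⟩ := hS
    rw [mem_Indep] at hSI
    obtain ⟨hsub, hind⟩ := hSI
    have bound : ∀ a ∈ S, 1 ≤ a ∧ a ≤ n := by
      intro a ha; have := hsub ha; simpa [mem_Icc] using this
    ext x
    simp only [mem_insert, mem_union, mem_image, mem_filter]
    constructor
    · rintro (rfl | ⟨hx, _⟩ | ⟨c, ⟨b, ⟨hb, hib⟩, rfl⟩, rfl⟩)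
      · exact hiS
      · exact hx
      · have := bound b hb
        have : b - (i + h) + (i + h) = b := by
          have := hind i hiS b hb hib; omega
        rwa [this]
    · intro hx
      rcases lt_trichotomy x i with hlt | rfl | hgt
      · exact Or.inr (Or.inl ⟨hx, hlt⟩)
      · exact Or.inl rfl
      · refine Or.inr (Or.inr ⟨x - (i + h), ⟨x, ⟨hx, hgt⟩, rfl⟩, ?_⟩)
        have := hind i hiS x hx hgt; omega
  · intro p hp
    simp only [mem_coe, mem_product] at hp
    obtain ⟨hA, hB⟩ := hp
    rw [mem_Indep] at hA hB
    have bA : ∀ a ∈ p.1, 1 ≤ a ∧ a ≤ i - h - 1 := by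
      intro a ha; have := hA.1 ha; simpa [mem_Icc] using this
    have bB : ∀ b ∈ p.2, 1 ≤ b ∧ b ≤ n - i - h := by
      intro b hb; have := hB.1 hb; simpa [mem_Icc] using this
    have e1 : (insert i (p.1 ∪ p.2.image (fun b => b + (i + h)))).filter (· < i) = p.1 := by
      ext x
      simp only [mem_filter, mem_insert, mem_union, mem_image]
      constructor
      · rintro ⟨rfl | hx | ⟨b, hb, rfl⟩, hlt⟩
        · omega
        · exact hx
        · have := bB b hb; omega
      · intro hx; have := bA x hx; exact ⟨Or.inr (Or.inl hx), by omega⟩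
    have e2 : (insert i (p.1 ∪ p.2.image (fun b => b + (i + h)))).filter (fun b => i < b)
        = p.2.image (fun b => b + (i + h)) := by
      ext x
      simp only [mem_filter, mem_insert, mem_union, mem_image]
      constructor
      · rintro ⟨rfl | hx | ⟨b, hb, rfl⟩, hlt⟩
        · omega
        · have := bA x hx; omega
        · exact ⟨b, hb, rfl⟩
      · rintro ⟨b, hb, rfl⟩; have := bB b hb; exact ⟨Or.inr (Or.inr ⟨b, hb, rfl⟩), by omega⟩
    beta_reduce
    rw [e1, e2] at *
    · ext1
      · simpa using e1
      · simp only
        rw [e2, image_image]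
        rw [show ((fun b => b - (i+h)) ∘ (fun b => b + (i+h))) = id by funext b; simp]
        exact image_id

lemma coverCount_eq_sum (n h : ℕ) :
    coverCount n h = ∑ S ∈ Indep n h, S.card := by
  rw [coverCount]
  rw [card_eq_sum_card_fiberwise (f := Prod.fst) (t := Indep n h)
    (by intro p hp; simp only [mem_coe, mem_filter, mem_product] at hp; exact hp.1.1)]
  refine Finset.sum_congr rfl fun S hS => ?_
  have step1 : {p ∈ (Indep n h ×ˢ Indep n h).filter
      (fun p => p.2 ⊆ p.1 ∧ p.1.card = p.2.card + 1) | p.1 = S}.card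
      = ((Indep n h).filter (fun T => T ⊆ S ∧ S.card = T.card + 1)).card := by
    apply card_nbij' (i := Prod.snd) (j := fun T => (S, T))
    · intro p hp
      simp only [mem_coe, mem_filter, mem_product] at hp ⊢
      obtain ⟨⟨⟨_, h2⟩, hc⟩, he⟩ := hp
      subst he
      exact ⟨h2, hc⟩
    · intro T hT
      simp only [mem_coe, mem_filter, mem_product] at hT ⊢
      exact ⟨⟨⟨hS, hT.1⟩, hT.2⟩, trivial⟩
    · intro p hp
      simp only [mem_coe, mem_filter] at hp
      rw [← hp.2]
    · intro T _; rfl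
  rw [step1]
  have step2 : (Indep n h).filter (fun T => T ⊆ S ∧ S.card = T.card + 1)
      = S.image (fun x => S.erase x) := by
    ext T
    simp only [mem_filter, mem_image]
    constructor
    · rintro ⟨hT, hTS, hc⟩
      have hcard : (S \ T).card = 1 := by
        rw [card_sdiff_of_subset hTS]; omega
      obtain ⟨x, hx⟩ := card_eq_one.mp hcard
      have hxS : x ∈ S := by
        have : x ∈ S \ T := hx ▸ mem_singleton_self x
        exact (mem_sdiff.mp this).1
      refine ⟨x, hxS, ?_⟩
      rw [erase_eq, ← hx, sdiff_sdiff_self_left]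
      exact inter_eq_right.mpr hTS
    · rintro ⟨x, hxS, rfl⟩
      refine ⟨indep_mono hS (erase_subset x S), erase_subset x S, ?_⟩
      rw [card_erase_of_mem hxS]
      have : 1 ≤ S.card := card_pos.mpr ⟨x, hxS⟩
      omega
  rw [step2, card_image_of_injOn (erase_injOn S)]

theorem stmt12 (n h : ℕ) :
    coverCount n h = ∑ i ∈ Finset.Icc 1 n, hFib h i * hFib h (n - i + 1) := by
  rw [coverCount_eq_sum]
  have step : ∑ S ∈ Indep n h, S.card
      = ∑ i ∈ Finset.Icc 1 n, ((Indep n h).filter (fun S => i ∈ S)).card := by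
    have hc : ∀ S ∈ Indep n h, S.card = ∑ i ∈ Finset.Icc 1 n, ite (i ∈ S) 1 0 := by
      intro S hS
      rw [← card_filter]
      congr 1
      ext x
      simp only [mem_filter, mem_Icc]
      constructor
      · intro hx
        have := (mem_Indep.mp hS).1 hx
        simp only [mem_Icc] at this
        exact ⟨this, hx⟩
      · rintro ⟨-, hx⟩; exact hx
    rw [Finset.sum_congr rfl hc, Finset.sum_comm]
    refine Finset.sum_congr rfl fun i _ => ?_
    rw [card_filter]
  rw [step]
  refine Finset.sum_congr rfl fun i hi => ?_
  simp only [mem_Icc] at hi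
  rw [card_contain n h i hi.1 hi.2, card_Indep, card_Indep]
  congr 1
  · rcases le_or_gt i (h + 1) with hc | hc
    · rw [hFib_eq_one (by omega), hFib_eq_one (by omega)]
    · congr 1; omega
  · rcases le_or_gt (n - i) h with hc | hc
    · rw [hFib_eq_one (by omega), hFib_eq_one (by omega)]
    · congr 1; omega
end
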